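/- Let ν > 0. There exists a sequence of coefficients (b_j)_{j≥0} in ℂ with Σ_{j≥0} |b_j|² (j+1)^{−2ν} < ∞ (so that f(z) = Σ_{j≥0} b_j z^j defines a function in the weighted Dirichlet space S_{−ν}) such that for every θ ∈ ℝ, limsup_{r→1⁻} |f(r e^{iθ})| = ∞; in particular, for every θ the radial limit lim_{r→1⁻} f(r e^{iθ}) does not exist. Explicitly: for every M > 0 and every δ > 0 there exists r with 1 − δ < r < 1 and |Σ_{j≥0} b_j (r e^{iθ})^j| > M. -/

import Mathlib

open Filter Topology


noncomputable def nseq (ν : ℝ) : ℕ → ℕ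
  | 0 => 1
  | k + 1 => 24 * (k + 1) * nseq ν k + (⌈(128:ℝ) ^ (((k:ℝ) + 1) / (2 * ν))⌉₊ + 8 ^ (k + 1))

lemma pow_le_nseq (ν : ℝ) (k : ℕ) : 8 ^ k ≤ nseq ν k := by
  cases k with
  | zero => simp [nseq]
  | succ k => simp only [nseq]; omega

lemma nseq_pos (ν : ℝ) (k : ℕ) : 1 ≤ nseq ν k :=
  le_trans (Nat.one_le_pow _ _ (by norm_num)) (pow_le_nseq ν k)

lemma nseq_strictMono (ν : ℝ) : StrictMono (nseq ν) := by
  apply strictMono_nat_of_lt_succ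
  intro k
  have h1 := nseq_pos ν k
  have : nseq ν (k+1) = 24 * (k + 1) * nseq ν k + (⌈(128:ℝ) ^ (((k:ℝ) + 1) / (2 * ν))⌉₊ + 8 ^ (k + 1)) := rfl
  nlinarith [Nat.zero_le (⌈(128:ℝ) ^ (((k:ℝ) + 1) / (2 * ν))⌉₊ + 8 ^ (k + 1))]

lemma mul_le_nseq_succ (ν : ℝ) (k : ℕ) : 8 * (k + 1) * nseq ν k ≤ nseq ν (k + 1) := by
  have : nseq ν (k+1) = 24 * (k + 1) * nseq ν k + (⌈(128:ℝ) ^ (((k:ℝ) + 1) / (2 * ν))⌉₊ + 8 ^ (k + 1)) := rfl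
  have h1 : 8 * (k + 1) * nseq ν k ≤ 24 * (k + 1) * nseq ν k :=
    Nat.mul_le_mul_right _ (by nlinarith)
  rw [this]; exact le_trans h1 (Nat.le_add_right _ _)

lemma rpow_le_nseq (ν : ℝ) (hν : 0 < ν) (k : ℕ) :
    (128:ℝ) ^ ((k:ℝ) / (2 * ν)) ≤ (nseq ν k : ℝ) := by
  cases k with
  | zero => simp [nseq]
  | succ k =>
      have h1 : ⌈(128:ℝ) ^ (((k:ℝ) + 1) / (2 * ν))⌉₊ ≤ nseq ν (k+1) := by
        simp only [nseq]
        calc ⌈(128:ℝ) ^ (((k:ℝ) + 1) / (2 * ν))⌉₊ ≤ _ := Nat.le_add_right _ _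
          _ ≤ _ := Nat.le_add_left _ _
      have h2 : (128:ℝ) ^ (((k:ℝ) + 1) / (2 * ν)) ≤ ⌈(128:ℝ) ^ (((k:ℝ) + 1) / (2 * ν))⌉₊ :=
        Nat.le_ceil _
      push_cast
      calc (128:ℝ) ^ (((k:ℝ) + 1) / (2 * ν)) ≤ _ := h2
        _ ≤ _ := by exact_mod_cast h1

lemma nseq_rpow_ge (ν : ℝ) (hν : 0 < ν) (k : ℕ) :
    (128:ℝ) ^ k ≤ ((nseq ν k : ℝ) + 1) ^ (2 * ν) := by
  have h0 : (0:ℝ) < 2 * ν := by linarith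
  have h1 : (128:ℝ) ^ ((k:ℝ) / (2 * ν)) ≤ (nseq ν k : ℝ) + 1 :=
    le_trans (rpow_le_nseq ν hν k) (by linarith)
  have h2 : ((128:ℝ) ^ ((k:ℝ) / (2 * ν))) ^ (2 * ν) ≤ ((nseq ν k : ℝ) + 1) ^ (2 * ν) :=
    Real.rpow_le_rpow (by positivity) h1 (le_of_lt h0)
  calc (128:ℝ) ^ k = (128:ℝ) ^ (k:ℝ) := by rw [Real.rpow_natCast]
    _ = ((128:ℝ) ^ ((k:ℝ) / (2 * ν))) ^ (2 * ν) := by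
        rw [← Real.rpow_mul (by norm_num), div_mul_cancel₀]
        exact ne_of_gt h0
    _ ≤ _ := h2

open Classical in
noncomputable def bcoef (ν : ℝ) (j : ℕ) : ℂ :=
  if h : ∃ k, nseq ν k = j then (8:ℂ) ^ h.choose else 0

lemma bcoef_apply (ν : ℝ) (k : ℕ) : bcoef ν (nseq ν k) = (8:ℂ) ^ k := by
  have h : ∃ m, nseq ν m = nseq ν k := ⟨k, rfl⟩
  rw [bcoef]; rw [ dif_pos h]
  congr 1
  exact (nseq_strictMono ν).injective h.choose_spec

lemma bcoef_eq_zero (ν : ℝ) {j : ℕ} (h : ¬ ∃ k, nseq ν k = j) : bcoef ν j = 0 := by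
  rw [bcoef]; rw [ dif_neg h]

lemma norm_bcoef_le (ν : ℝ) (j : ℕ) : ‖bcoef ν j‖ ≤ (j:ℝ) + 1 := by
  by_cases h : ∃ k, nseq ν k = j
  · rw [bcoef]; rw [ dif_pos h]
    have h1 : 8 ^ h.choose ≤ j := by
      have := pow_le_nseq ν h.choose
      rw [h.choose_spec] at this; exact this
    rw [norm_pow]
    simp only [Complex.norm_ofNat]
    calc (8:ℝ) ^ h.choose = ((8 ^ h.choose : ℕ) : ℝ) := by push_cast; ring
      _ ≤ (j:ℝ) := by exact_mod_cast h1
      _ ≤ _ := by linarith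
  · rw [bcoef_eq_zero ν h]; simp; positivity

noncomputable def rr (ν : ℝ) (k : ℕ) : ℝ := 1 - 1 / (2 * (nseq ν k : ℝ))

lemma rr_nonneg (ν : ℝ) (k : ℕ) : 0 ≤ rr ν k := by
  have h := nseq_pos ν k
  have h1 : (1:ℝ) ≤ (nseq ν k : ℝ) := by exact_mod_cast h
  have : 1 / (2 * (nseq ν k : ℝ)) ≤ 1 / 2 := by
    apply div_le_div_of_nonneg_left (by norm_num) (by norm_num) <;> linarith
  rw [rr]; linarith

lemma rr_lt_one (ν : ℝ) (k : ℕ) : rr ν k < 1 := by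
  have h1 : (1:ℝ) ≤ (nseq ν k : ℝ) := by exact_mod_cast nseq_pos ν k
  have : 0 < 1 / (2 * (nseq ν k : ℝ)) := by positivity
  rw [rr]; linarith

lemma rr_mono (ν : ℝ) : Monotone (rr ν) := by
  intro a b hab
  have h1 : (nseq ν a : ℝ) ≤ (nseq ν b : ℝ) := by
    exact_mod_cast (nseq_strictMono ν).monotone hab
  have h2 : (1:ℝ) ≤ (nseq ν a : ℝ) := by exact_mod_cast nseq_pos ν a
  have : 1 / (2 * (nseq ν b : ℝ)) ≤ 1 / (2 * (nseq ν a : ℝ)) := by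
    apply div_le_div_of_nonneg_left (by norm_num) (by linarith) (by linarith)
  simp only [rr]; linarith

-- key base bound: (1 - 1/(2N))^(2N) ≤ 1/2
lemma base_bound (N : ℕ) (hN : 1 ≤ N) : (1 - 1 / (2 * (N:ℝ))) ^ (2 * N) ≤ 1 / 2 := by
  have hN1 : (1:ℝ) ≤ (N:ℝ) := by exact_mod_cast hN
  have hx : (0:ℝ) ≤ 1 - 1 / (2 * (N:ℝ)) := by
    have : 1 / (2 * (N:ℝ)) ≤ 1 / 2 := by
      apply div_le_div_of_nonneg_left (by norm_num) (by norm_num) (by linarith)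
    linarith
  have h1 : 1 - 1 / (2 * (N:ℝ)) ≤ Real.exp (-(1 / (2 * (N:ℝ)))) := by
    have := Real.add_one_le_exp (-(1 / (2 * (N:ℝ))))
    linarith
  have h2 : (1 - 1 / (2 * (N:ℝ))) ^ (2 * N) ≤ Real.exp (-(1 / (2 * (N:ℝ)))) ^ (2 * N) :=
    pow_le_pow_left₀ hx h1 _
  rw [← Real.exp_nat_mul] at h2
  have h3 : (↑(2 * N) : ℝ) * (-(1 / (2 * (N:ℝ)))) = -1 := by
    push_cast
    field_simp
  rw [h3] at h2
  have h4 : Real.exp (-1) ≤ 1 / 2 := by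
    rw [Real.exp_neg]
    rw [inv_le_comm₀ (Real.exp_pos 1) (by norm_num)]
    calc (1/2 : ℝ)⁻¹ = 2 := by norm_num
      _ ≤ Real.exp 1 := by linarith [Real.add_one_le_exp 1]
  linarith

lemma summable_coef (ν : ℝ) {w : ℂ} (hw : ‖w‖ < 1) :
    Summable (fun j : ℕ => bcoef ν j * w ^ j) := by
  have h1 : Summable (fun j : ℕ => ((j:ℝ) + 1) * ‖w‖ ^ j) := by
    have := summable_pow_mul_geometric_of_norm_lt_one (r := ‖w‖) 1 (by simpa using hw)
    have h2 : Summable (fun j : ℕ => ‖w‖ ^ j) := summable_geometric_of_lt_one (norm_nonneg w) hw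
    refine ((this.add h2).congr fun j => ?_)
    simp only [pow_one]
    ring
  apply Summable.of_norm_bounded h1
  intro j
  rw [norm_mul, norm_pow]
  exact mul_le_mul_of_nonneg_right (norm_bcoef_le ν j) (by positivity)

lemma support_sub (ν : ℝ) (w : ℂ) :
    Function.support (fun j : ℕ => bcoef ν j * w ^ j) ⊆ Set.range (nseq ν) := by
  intro j hj
  by_contra hr
  have : bcoef ν j = 0 := bcoef_eq_zero ν (by simpa [Set.range] using hr)
  simp [Function.support, this] at hj

lemma tsum_transfer (ν : ℝ) {w : ℂ} (hw : ‖w‖ < 1) :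
    ∑' j : ℕ, bcoef ν j * w ^ j = ∑' m : ℕ, (8:ℂ) ^ m * w ^ (nseq ν m) := by
  rw [← (nseq_strictMono ν).injective.tsum_eq (support_sub ν w)]
  exact tsum_congr fun m => by rw [bcoef_apply]

lemma summable_g (ν : ℝ) {w : ℂ} (hw : ‖w‖ < 1) :
    Summable (fun m : ℕ => (8:ℂ) ^ m * w ^ (nseq ν m)) := by
  have h0 : ∀ x ∉ Set.range (nseq ν), bcoef ν x * w ^ x = 0 := by
    intro x hx
    rw [bcoef_eq_zero ν (by simpa [Set.range] using hx), zero_mul]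
  have := ((nseq_strictMono ν).injective.summable_iff h0).mpr (summable_coef ν hw)
  exact this.congr fun m => by simp [Function.comp, bcoef_apply]

lemma tail_bound (ν : ℝ) {k m : ℕ} (h : k < m) :
    (8:ℝ) ^ m * (rr ν k) ^ (nseq ν m) ≤ (1/2:ℝ) ^ m := by
  obtain ⟨l, rfl⟩ : ∃ l, m = l + 1 := ⟨m - 1, by omega⟩
  have hkl : k ≤ l := by omega
  have h1 : (rr ν k) ^ (nseq ν (l+1)) ≤ (rr ν l) ^ (nseq ν (l+1)) :=
    pow_le_pow_left₀ (rr_nonneg ν k) (rr_mono ν hkl) _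
  have hexp : 2 * nseq ν l * (4 * (l + 1)) ≤ nseq ν (l+1) := by
    have := mul_le_nseq_succ ν l
    calc 2 * nseq ν l * (4 * (l + 1)) = 8 * (l + 1) * nseq ν l := by ring
      _ ≤ _ := this
  have h2 : (rr ν l) ^ (nseq ν (l+1)) ≤ (rr ν l) ^ (2 * nseq ν l * (4 * (l + 1))) :=
    pow_le_pow_of_le_one (rr_nonneg ν l) (le_of_lt (rr_lt_one ν l)) hexp
  have h3 : (rr ν l) ^ (2 * nseq ν l * (4 * (l + 1)))
      = ((rr ν l) ^ (2 * nseq ν l)) ^ (4 * (l + 1)) := by rw [pow_mul]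
  have h4 : (rr ν l) ^ (2 * nseq ν l) ≤ 1 / 2 := base_bound (nseq ν l) (nseq_pos ν l)
  have h5 : ((rr ν l) ^ (2 * nseq ν l)) ^ (4 * (l + 1)) ≤ (1/2:ℝ) ^ (4 * (l + 1)) :=
    pow_le_pow_left₀ (pow_nonneg (rr_nonneg ν l) _) h4 _
  have h6 : (rr ν k) ^ (nseq ν (l+1)) ≤ (1/2:ℝ) ^ (4 * (l + 1)) := by
    calc _ ≤ _ := h1
      _ ≤ _ := h2
      _ = _ := h3
      _ ≤ _ := h5
  calc (8:ℝ) ^ (l+1) * (rr ν k) ^ (nseq ν (l+1))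
      ≤ (8:ℝ) ^ (l+1) * (1/2:ℝ) ^ (4 * (l + 1)) :=
        mul_le_mul_of_nonneg_left h6 (by positivity)
    _ = (1/2:ℝ) ^ (l+1) := by
        rw [pow_mul, ← mul_pow]; norm_num

lemma radial_lb (ν : ℝ) (θ : ℝ) (k : ℕ) :
    (8:ℝ) ^ k / 3 - 2 ≤
      ‖∑' j : ℕ, bcoef ν j * ((rr ν k : ℂ) * Complex.exp (θ * Complex.I)) ^ j‖ := by
  set w : ℂ := (rr ν k : ℂ) * Complex.exp (θ * Complex.I) with hw
  have hwn : ‖w‖ = rr ν k := by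
    rw [hw, norm_mul, Complex.norm_exp_ofReal_mul_I, mul_one, Complex.norm_real,
      Real.norm_of_nonneg (rr_nonneg ν k)]
  have hw1 : ‖w‖ < 1 := by rw [hwn]; exact rr_lt_one ν k
  rw [tsum_transfer ν hw1]
  set g : ℕ → ℂ := fun m => (8:ℂ) ^ m * w ^ (nseq ν m) with hg
  have hsg : Summable g := summable_g ν hw1
  have hnorm_g : ∀ m, ‖g m‖ = (8:ℝ) ^ m * (rr ν k) ^ (nseq ν m) := by
    intro m
    rw [hg]
    simp only [norm_mul, norm_pow, hwn, Complex.norm_ofNat]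
  -- main term lower bound
  have hNk : (1:ℝ) ≤ (nseq ν k : ℝ) := by exact_mod_cast nseq_pos ν k
  have hmain : (8:ℝ) ^ k / 2 ≤ ‖g k‖ := by
    rw [hnorm_g k]
    have hr : (1:ℝ)/2 ≤ (rr ν k) ^ (nseq ν k) := by
      have hb := one_add_mul_le_pow (a := -(1 / (2 * (nseq ν k : ℝ)))) (by
        have : 1 / (2 * (nseq ν k : ℝ)) ≤ 1/2 := by
          apply div_le_div_of_nonneg_left (by norm_num) (by norm_num) (by linarith)
        linarith) (nseq ν k)
      have he : 1 + (nseq ν k : ℝ) * -(1 / (2 * (nseq ν k : ℝ))) = 1/2 := by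
        have hne : (nseq ν k:ℝ) ≠ 0 := by linarith
        field_simp
        ring
      rw [he] at hb
      simpa [rr, sub_eq_add_neg] using hb
    calc (8:ℝ) ^ k / 2 = (8:ℝ) ^ k * (1/2) := by ring
      _ ≤ _ := mul_le_mul_of_nonneg_left hr (by positivity)
  -- remainder bound
  set v : ℕ → ℝ := fun m =>
    (if m < k then (8:ℝ) ^ m else 0) + (if k < m then (1/2:ℝ) ^ m else 0) with hv
  have hv_nonneg : ∀ m, 0 ≤ v m := by
    intro m; rw [hv]; positivity
  have hptw : ∀ m, ‖if m = k then 0 else g m‖ ≤ v m := by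
    intro m
    rcases lt_trichotomy m k with hmk | hmk | hmk
    · rw [if_neg (by omega), hnorm_g m, hv]
      simp only [if_pos hmk, if_neg (by omega : ¬ k < m), add_zero]
      have : (rr ν k) ^ (nseq ν m) ≤ 1 :=
        pow_le_one₀ (rr_nonneg ν k) (le_of_lt (rr_lt_one ν k))
      nlinarith [pow_pos (by norm_num : (0:ℝ) < 8) m]
    · rw [if_pos hmk]; simpa using hv_nonneg m
    · rw [if_neg (by omega), hnorm_g m, hv]
      simp only [if_neg (by omega : ¬ m < k), if_pos hmk, zero_add]
      exact tail_bound ν hmk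
  have hsv : Summable v := by
    apply Summable.add
    · apply summable_of_ne_finset_zero (s := Finset.range k)
      intro m hm
      simp only [Finset.mem_range, not_lt] at hm
      simp [if_neg (by omega : ¬ m < k)]
    · apply Summable.of_nonneg_of_le (fun m => by positivity)
        (fun m => ?_) (summable_geometric_of_lt_one (by norm_num) (by norm_num : (1/2:ℝ) < 1))
      split <;> simp [le_of_lt, pow_nonneg]
  have hsumrem : Summable (fun m => if m = k then (0:ℂ) else g m) := by
    apply Summable.of_norm_bounded hsv hptw
  have hrem : ‖∑' m, if m = k then (0:ℂ) else g m‖ ≤ (8:ℝ) ^ k / 7 + 2 := by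
    have h1 : ‖∑' m, if m = k then (0:ℂ) else g m‖ ≤ ∑' m, v m := by
      calc _ ≤ ∑' m, ‖if m = k then (0:ℂ) else g m‖ :=
            norm_tsum_le_tsum_norm (hsv.of_nonneg_of_le (fun m => norm_nonneg _) hptw)
        _ ≤ ∑' m, v m := Summable.tsum_le_tsum hptw
            (hsv.of_nonneg_of_le (fun m => norm_nonneg _) hptw) hsv
    have h2 : ∑' m, v m ≤ (8:ℝ) ^ k / 7 + 2 := by
      have hs1 : Summable (fun m => if m < k then (8:ℝ) ^ m else 0) := by
        apply summable_of_ne_finset_zero (s := Finset.range k)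
        intro m hm
        simp only [Finset.mem_range, not_lt] at hm
        simp [if_neg (by omega : ¬ m < k)]
      have hs2 : Summable (fun m => if k < m then (1/2:ℝ) ^ m else 0) := by
        apply Summable.of_nonneg_of_le (fun m => by positivity)
          (fun m => ?_) (summable_geometric_of_lt_one (by norm_num) (by norm_num : (1/2:ℝ) < 1))
        split <;> simp [le_of_lt, pow_nonneg]
      rw [hv, Summable.tsum_add hs1 hs2]
      have hA : ∑' m, (if m < k then (8:ℝ) ^ m else 0) ≤ (8:ℝ) ^ k / 7 := by
        rw [tsum_eq_sum (s := Finset.range k) (by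
          intro m hm
          simp only [Finset.mem_range, not_lt] at hm
          simp [if_neg (by omega : ¬ m < k)])]
        have : ∑ m ∈ Finset.range k, (if m < k then (8:ℝ) ^ m else 0)
            = ∑ m ∈ Finset.range k, (8:ℝ) ^ m := by
          apply Finset.sum_congr rfl
          intro m hm
          rw [if_pos (Finset.mem_range.mp hm)]
        rw [this, geom_sum_eq (by norm_num : (8:ℝ) ≠ 1)]
        have : (0:ℝ) ≤ (8:ℝ) ^ k := by positivity
        nlinarith [one_le_pow₀ (by norm_num : (1:ℝ) ≤ 8) (n := k)]
      have hB : ∑' m, (if k < m then (1/2:ℝ) ^ m else 0) ≤ 2 := by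
        calc _ ≤ ∑' m, (1/2:ℝ) ^ m := Summable.tsum_le_tsum (fun m => by
              split <;> simp [le_of_lt, pow_nonneg]) hs2
              (summable_geometric_of_lt_one (by norm_num) (by norm_num))
          _ = 2 := by
              rw [tsum_geometric_of_lt_one (by norm_num) (by norm_num)]; norm_num
      linarith
    linarith
  have hsplit : ∑' m, g m = g k + ∑' m, if m = k then (0:ℂ) else g m :=
    Summable.tsum_eq_add_tsum_ite hsg k
  have hfinal : ‖g k‖ - ‖∑' m, if m = k then (0:ℂ) else g m‖ ≤ ‖∑' m, g m‖ := by
    rw [hsplit]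
    have := norm_sub_le (g k + ∑' m, if m = k then (0:ℂ) else g m)
      (∑' m, if m = k then (0:ℂ) else g m)
    simp only [add_sub_cancel_right] at this
    linarith
  have h8 : (0:ℝ) ≤ (8:ℝ) ^ k := by positivity
  have : (8:ℝ) ^ k / 2 - ((8:ℝ) ^ k / 7 + 2) ≤ ‖∑' m, g m‖ := by
    have := hrem
    linarith
  nlinarith

lemma summable_weight (ν : ℝ) (hν : 0 < ν) :
    Summable (fun j : ℕ => ‖bcoef ν j‖ ^ 2 * ((j : ℝ) + 1) ^ (-(2 * ν))) := by
  set f : ℕ → ℝ := fun j => ‖bcoef ν j‖ ^ 2 * ((j : ℝ) + 1) ^ (-(2 * ν)) with hf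
  have h0 : ∀ x ∉ Set.range (nseq ν), f x = 0 := by
    intro x hx
    rw [hf]
    simp only
    rw [bcoef_eq_zero ν (by simpa [Set.range] using hx)]
    simp
  rw [← (nseq_strictMono ν).injective.summable_iff h0]
  apply Summable.of_nonneg_of_le (fun k => by rw [Function.comp, hf]; positivity)
    (fun k => ?_) (summable_geometric_of_lt_one (by norm_num) (by norm_num : (1/2:ℝ) < 1))
  have hb : ((nseq ν k : ℝ) + 1) ^ (-(2 * ν)) ≤ ((128:ℝ) ^ k)⁻¹ := by
    rw [Real.rpow_neg (by positivity)]
    apply inv_anti₀ (by positivity) (nseq_rpow_ge ν hν k)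
  have hnorm : ‖bcoef ν (nseq ν k)‖ ^ 2 = (64:ℝ) ^ k := by
    rw [bcoef_apply, norm_pow]
    simp only [Complex.norm_ofNat]
    rw [← pow_mul, pow_mul']
    norm_num
  calc (f ∘ nseq ν) k = (64:ℝ) ^ k * ((nseq ν k : ℝ) + 1) ^ (-(2 * ν)) := by
        rw [Function.comp, hf]; simp only; rw [hnorm]
    _ ≤ (64:ℝ) ^ k * ((128:ℝ) ^ k)⁻¹ := by
        apply mul_le_mul_of_nonneg_left hb (by positivity)
    _ = (1/2:ℝ) ^ k := by
        rw [← div_eq_mul_inv, ← div_pow]; norm_num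

lemma rr_tendsto (ν : ℝ) :
    Tendsto (fun k => rr ν k) atTop (nhdsWithin (1:ℝ) (Set.Iio (1:ℝ))) := by
  apply tendsto_nhdsWithin_of_tendsto_nhds_of_eventually_within
  · have h1 : Tendsto (fun k => (nseq ν k : ℝ)) atTop atTop :=
      tendsto_natCast_atTop_atTop.comp (nseq_strictMono ν).tendsto_atTop
    have h2 : Tendsto (fun k => 1 / (2 * (nseq ν k : ℝ))) atTop (𝓝 0) := by
      have hm : Tendsto (fun k : ℕ => 2 * (nseq ν k : ℝ)) atTop atTop :=
        h1.const_mul_atTop (by norm_num)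
      have h2' : Tendsto (fun k : ℕ => (2 * (nseq ν k : ℝ))⁻¹) atTop (𝓝 0) :=
        hm.inv_tendsto_atTop
      apply h2'.congr
      intro k
      rw [one_div]
    have h3 : Tendsto (fun k => 1 - 1 / (2 * (nseq ν k : ℝ))) atTop (𝓝 (1 - 0)) :=
      tendsto_const_nhds.sub h2
    simpa [rr] using h3
  · exact Eventually.of_forall fun k => rr_lt_one ν k

/-- For every `ν > 0` there is a function
`f(z) = Σ_j b_j z^j` in the weighted Dirichlet space `S_{-ν}`
(i.e. `Σ_j |b_j|² (j+1)^{-2ν} < ∞`) such that for every `θ ∈ ℝ`,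
`limsup_{r→1⁻} |f(re^{iθ})| = ∞`; in particular no radial limit exists at any
boundary point. -/
theorem exists_dirichlet_function_without_radial_limits
    (ν : ℝ) (hν : 0 < ν) :
    ∃ b : ℕ → ℂ,
      Summable (fun j : ℕ => ‖b j‖ ^ 2 * ((j : ℝ) + 1) ^ (-(2 * ν))) ∧
      ∀ θ : ℝ,
        (∀ M > (0 : ℝ), ∃ᶠ (r : ℝ) in nhdsWithin (1 : ℝ) (Set.Iio (1 : ℝ)),
          M < ‖∑' j : ℕ, b j * ((r : ℂ) * Complex.exp (θ * Complex.I)) ^ j‖) ∧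
        ¬ ∃ L : ℂ, Tendsto
            (fun r : ℝ => ∑' j : ℕ, b j * ((r : ℂ) * Complex.exp (θ * Complex.I)) ^ j)
            (nhdsWithin (1 : ℝ) (Set.Iio (1 : ℝ))) (𝓝 L) := by
  refine ⟨bcoef ν, summable_weight ν hν, fun θ => ?_⟩
  have key : ∀ M > (0 : ℝ), ∃ᶠ (r : ℝ) in nhdsWithin (1 : ℝ) (Set.Iio (1 : ℝ)),
      M < ‖∑' j : ℕ, bcoef ν j * ((r : ℂ) * Complex.exp (θ * Complex.I)) ^ j‖ := by
    intro M hM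
    apply (rr_tendsto ν).frequently
    apply Eventually.frequently
    have h8 : Tendsto (fun k : ℕ => (8:ℝ) ^ k) atTop atTop :=
      tendsto_pow_atTop_atTop_of_one_lt (by norm_num)
    filter_upwards [h8.eventually_gt_atTop (3 * (M + 2))] with k hk
    have := radial_lb ν θ k
    linarith
  refine ⟨key, ?_⟩
  rintro ⟨L, hL⟩
  have hev : ∀ᶠ (r : ℝ) in nhdsWithin (1 : ℝ) (Set.Iio (1 : ℝ)),
      ‖∑' j : ℕ, bcoef ν j * ((r : ℂ) * Complex.exp (θ * Complex.I)) ^ j‖ < ‖L‖ + 1 :=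
    hL.norm.eventually (gt_mem_nhds (lt_add_one ‖L‖))
  have hfr := key (‖L‖ + 1) (by positivity)
  obtain ⟨r, h1, h2⟩ := (hfr.and_eventually hev).exists
  linarith
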